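/- Let n ∈ ℕ with n ≥ 5, and let v* be the largest natural number v such that v·2^v < 2^{n-3} (equivalently, v* = ⌈W₀(2^{n-3}·ln 2)/ln 2 − 1⌉, where W₀ is the principal branch of the Lambert W function). Then for every integer m with |m| ≤ 2^{v*} and |m| ≤ 2^{254}, there exists a bit string M of length n with τ(M) = m; that is, every such integer is representable as an n-bit takum. -/

import Mathlib

/-- Integer value of a bit string read MSB → LSB. -/
def bitsToNat (L : List Bool) : ℕ :=
  L.foldl (fun a b => 2 * a + (if b then 1 else 0)) 0

/-- The (linear) takum decoding function `τ`. A bit string (MSB → LSB, padded on the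
right with zero "ghost bits" as needed) consists of a sign bit `S`, a direction bit `D`,
three regime bits `R` with regime `r = int(R)` if `D = 1` and `r = 7 - int(R)` if
`D = 0`, `r` characteristic bits `C` with characteristic `c = 2^r - 1 + int(C)` if
`D = 1` and `c = -2^(r+1) + 1 + int(C)` if `D = 0`, and fraction bits `F` with fraction
`f = int(F)/2^p ∈ [0,1)`. The all-zeros string encodes `0` (`some 0`), `10…0` encodes
NaR (`none`), and every other string encodes `((1 - 3S) + f) · 2^e` with exponent
`e = (-1)^S (c + S)`. -/
def takumVal : List Bool → Option ℚ
  | [] => some 0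
  | S :: rest =>
    if rest.all (fun b => b == false) then
      if S then none else some 0
    else
      let D : Bool := rest.getD 0 false
      let rawR : ℕ := bitsToNat [rest.getD 1 false, rest.getD 2 false, rest.getD 3 false]
      let r : ℕ := if D then rawR else 7 - rawR
      let C : List Bool := (rest.drop 4).take r
      let Cpad : List Bool := C ++ List.replicate (r - C.length) false
      let c : ℤ := if D then 2 ^ r - 1 + (bitsToNat Cpad : ℤ)
                   else -(2 ^ (r + 1)) + 1 + (bitsToNat Cpad : ℤ)
      let F : List Bool := rest.drop (4 + r)
      let f : ℚ := (bitsToNat F : ℚ) / 2 ^ F.length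
      let s : ℤ := if S then 1 else 0
      let e : ℤ := (if S then -1 else 1) * (c + s)
      some (((1 - 3 * (s : ℚ)) + f) * 2 ^ e)

def natBits : ℕ → ℕ → List Bool
  | 0, _ => []
  | k+1, x => natBits k (x / 2) ++ [decide (x % 2 = 1)]

lemma natBits_length (k x : ℕ) : (natBits k x).length = k := by
  induction k generalizing x with
  | zero => rfl
  | succ k ih => simp [natBits, ih]

lemma foldl_bits (L : List Bool) (a : ℕ) :
    L.foldl (fun a b => 2 * a + (if b then 1 else 0)) a = a * 2 ^ L.length + bitsToNat L := by
  induction L generalizing a with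
  | nil => simp [bitsToNat]
  | cons b L ih =>
    have h1 : (b :: L).foldl (fun a b => 2 * a + (if b then 1 else 0)) a
        = L.foldl (fun a b => 2 * a + (if b then 1 else 0)) (2 * a + (if b then 1 else 0)) := rfl
    have h2 : bitsToNat (b :: L)
        = L.foldl (fun a b => 2 * a + (if b then 1 else 0)) (2 * 0 + (if b then 1 else 0)) := rfl
    rw [h1, ih, h2, ih]
    cases b <;> simp [List.length_cons] <;> ring

lemma bitsToNat_append (L M : List Bool) :
    bitsToNat (L ++ M) = bitsToNat L * 2 ^ M.length + bitsToNat M := by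
  unfold bitsToNat
  rw [List.foldl_append]
  exact foldl_bits M _

lemma bitsToNat_natBits (k x : ℕ) (h : x < 2 ^ k) : bitsToNat (natBits k x) = x := by
  induction k generalizing x with
  | zero =>
    have : x = 0 := by simpa using h
    simp [this, natBits, bitsToNat]
  | succ k ih =>
    have hx : x / 2 < 2 ^ k := by
      rw [Nat.div_lt_iff_lt_mul (by norm_num)]
      calc x < 2 ^ (k+1) := h
        _ = 2 ^ k * 2 := by ring
    rw [natBits, bitsToNat_append, ih _ hx]
    have : bitsToNat [decide (x % 2 = 1)] = x % 2 := by
      rcases Nat.mod_two_eq_zero_or_one x with h2 | h2 <;> simp [bitsToNat, h2]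
    rw [this]
    simp
    omega

lemma bitsToNat_eq_zero (L : List Bool) (h : ∀ x ∈ L, x = false) : bitsToNat L = 0 := by
  induction L with
  | nil => rfl
  | cons b L ih =>
    have hb : b = false := h b (by simp)
    have : bitsToNat (b :: L)
        = L.foldl (fun a b => 2 * a + (if b then 1 else 0)) (2 * 0 + (if b then 1 else 0)) := rfl
    rw [this, foldl_bits, hb]
    simp [ih fun x hx => h x (by simp [hx])]


lemma takumVal_encode (S D : Bool) (rawR r cv p fv : ℕ)
    (hrawR : rawR < 8)
    (hr : r = if D then rawR else 7 - rawR)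
    (hcv : cv < 2 ^ r) (hfv : fv < 2 ^ p)
    (hnz : D = true ∨ 0 < rawR ∨ 0 < cv ∨ 0 < fv) :
    takumVal (S :: D :: (natBits 3 rawR ++ (natBits r cv ++ natBits p fv))) =
      some ((((1 : ℚ) - 3 * (if S then 1 else 0)) + (fv : ℚ) / 2 ^ p) *
        2 ^ ((if S then (-1 : ℤ) else 1) *
          ((if D then ((2 : ℤ) ^ r - 1 + cv) else (-((2 : ℤ) ^ (r + 1)) + 1 + cv)) + (if S then 1 else 0)))) := by
  obtain ⟨b1, b2, b3, hR⟩ : ∃ a b c, natBits 3 rawR = [a, b, c] :=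
    List.length_eq_three.mp (natBits_length 3 rawR)
  set C := natBits r cv with hC
  set F := natBits p fv with hF
  have hClen : C.length = r := natBits_length r cv
  have hFlen : F.length = p := natBits_length p fv
  have hCval : bitsToNat C = cv := bitsToNat_natBits r cv hcv
  have hFval : bitsToNat F = fv := bitsToNat_natBits p fv hfv
  have hRval : bitsToNat [b1, b2, b3] = rawR := by
    rw [← hR]; exact bitsToNat_natBits 3 rawR (by norm_num [hrawR])
  rw [hR]
  have hrest : ([b1, b2, b3] ++ (C ++ F) : List Bool) = b1 :: b2 :: b3 :: (C ++ F) := by simp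
  rw [hrest]
  have hall : ¬ ((D :: b1 :: b2 :: b3 :: (C ++ F)).all (fun b => b == false) = true) := by
    intro h
    simp only [List.all_eq_true, beq_iff_eq] at h
    have hD : D = false := h D (by simp)
    have h1 : b1 = false := h b1 (by simp)
    have h2 : b2 = false := h b2 (by simp)
    have h3 : b3 = false := h b3 (by simp)
    have hCz : bitsToNat C = 0 := bitsToNat_eq_zero _ fun x hx => h x (by simp [hx])
    have hFz : bitsToNat F = 0 := bitsToNat_eq_zero _ fun x hx => h x (by simp [hx])
    have : rawR = 0 := by rw [← hRval, h1, h2, h3]; rfl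
    rcases hnz with h' | h' | h' | h'
    · rw [h'] at hD; exact absurd hD (by simp)
    · omega
    · omega
    · omega
  have hdrop2 : ((D :: b1 :: b2 :: b3 :: (C ++ F)).drop (4 + r)) = F := by
    rw [← List.drop_drop]
    show (C ++ F).drop r = F
    rw [← hClen]
    exact List.drop_left (l₁ := C) (l₂ := F)
  have htake : ((D :: b1 :: b2 :: b3 :: (C ++ F)).drop 4).take r = C := by
    show (C ++ F).take r = C
    exact List.take_left' hClen
  have hlen1 : C.length + F.length + 1 + 1 + 1 + 1 - (4 + r) = p := by
    rw [hClen, hFlen]; omega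
  have hlen2 : r - r ⊓ (C.length + F.length) = 0 := by
    rw [hClen, hFlen]; omega
  have htakeCF : (C ++ F).take r = C := List.take_left' hClen
  have hdropCF : (C ++ F).drop r = F := List.drop_left' hClen
  cases D <;> cases S <;>
    [skip; skip; skip; skip] <;>
  · simp only [if_true, if_false, Bool.false_eq_true, Bool.true_eq_false, ite_true, ite_false] at hr ⊢
    subst hr
    simp only [takumVal]
    rw [if_neg hall]
    simp [List.getD_cons_zero, List.getD_cons_succ, hRval, hdrop2, htake, htakeCF, hdropCF,
      hClen, hFlen, hCval, hFval]

lemma takumVal_all_false (k : ℕ) (hk : 1 ≤ k) :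
    takumVal (List.replicate k false) = some 0 := by
  obtain ⟨j, rfl⟩ : ∃ j, k = j + 1 := ⟨k - 1, by omega⟩
  rw [List.replicate_succ]
  simp [takumVal]

/-- **Consecutive takum integers (representability).**
For `n ≥ 5`, let `v` be the largest natural number with `v·2^v < 2^(n-3)`
(equivalently `v = ⌈W₀(2^(n-3)·ln 2)/ln 2 − 1⌉`). Then every integer `m` with
`|m| ≤ 2^v` and `|m| ≤ 2^254` is representable as an `n`-bit takum. -/
theorem takum_consecutive_integers (n : ℕ) (hn : 5 ≤ n) (v : ℕ)
    (hv : v * 2 ^ v < 2 ^ (n - 3))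
    (hmax : ∀ u : ℕ, u * 2 ^ u < 2 ^ (n - 3) → u ≤ v)
    (m : ℤ) (hm : |m| ≤ 2 ^ v) (hbound : |m| ≤ 2 ^ 254) :
    ∃ M : List Bool, M.length = n ∧ takumVal M = some (m : ℚ) := by
  by_cases h5 : n = 5
  · subst h5
    simp only [show (5:ℕ) - 3 = 2 by rfl] at hv hmax
    have hv2 : v < 2 := by
      by_contra h
      push_neg at h
      have h1 : 2 * 2 ^ 2 ≤ v * 2 ^ v :=
        Nat.mul_le_mul h (Nat.pow_le_pow_right (by norm_num) h)
      norm_num at h1 hv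
      omega
    have hv1 : 1 ≤ v := hmax 1 (by norm_num)
    have hveq : v = 1 := by omega
    subst hveq
    rw [abs_le] at hm
    norm_num at hm
    obtain ⟨hm1, hm2⟩ := hm
    interval_cases m
    · exact ⟨[true, false, true, true, true], by simp, by norm_num [takumVal, bitsToNat]⟩
    · exact ⟨[true, true, false, false, false], by simp, by norm_num [takumVal, bitsToNat]⟩
    · exact ⟨List.replicate 5 false, by simp, by rw [takumVal_all_false 5 (by norm_num)]; norm_num⟩
    · exact ⟨[false, true, false, false, false], by simp, by norm_num [takumVal, bitsToNat]⟩
    · exact ⟨[false, true, false, false, true], by simp, by norm_num [takumVal, bitsToNat]⟩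
  have hn6 : 6 ≤ n := by omega
  have hv1 : 1 ≤ v := by
    refine hmax 1 ?_
    have h1 : (2:ℕ) ^ 2 ≤ 2 ^ (n - 3) := Nat.pow_le_pow_right (by norm_num) (by omega)
    norm_num at h1 ⊢
    omega
  have key : ∀ r : ℕ, 2 ^ r ≤ v → r + v + 4 ≤ n := by
    intro r hrv
    have h1 : (2:ℕ) ^ (r + v) ≤ v * 2 ^ v := by
      rw [pow_add]
      exact Nat.mul_le_mul_right _ hrv
    have h2 := lt_of_le_of_lt h1 hv
    have h3 := (Nat.pow_lt_pow_iff_right (by norm_num : 1 < 2)).mp h2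
    omega
  rcases lt_trichotomy m 0 with hneg | rfl | hpos
  · -- negative case
    set a := (-m).toNat with ha
    have ham : (m : ℚ) = -(a : ℚ) := by
      have : ((-m).toNat : ℤ) = -m := Int.toNat_of_nonneg (by omega)
      have h2 : (((-m).toNat : ℤ) : ℚ) = ((-m : ℤ) : ℚ) := by exact_mod_cast this
      push_cast at h2 ⊢
      linarith
    have ha1 : 1 ≤ a := by omega
    have hav : a ≤ 2 ^ v := by
      have h1 := (abs_le.mp hm).1
      have h2 : ((2 ^ v : ℕ) : ℤ) = 2 ^ v := by push_cast; ring
      omega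
    have ha254 : a ≤ 2 ^ 254 := by
      have h1 := (abs_le.mp hbound).1
      have h2 : ((2 ^ 254 : ℕ) : ℤ) = 2 ^ 254 := by norm_cast
      omega
    by_cases ha1' : a = 1
    · -- m = -1
      refine ⟨true :: true :: (natBits 3 0 ++ (natBits 0 0 ++ natBits (n - 5) 0)), ?_, ?_⟩
      · simp [natBits_length]
        omega
      · rw [takumVal_encode true true 0 0 0 (n - 5) 0 (by norm_num) (by simp)
          (by norm_num) (by positivity) (Or.inl rfl)]
        rw [ham, ha1']
        norm_num
    -- a ≥ 2
    have ha2 : 2 ≤ a := by omega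
    set e := Nat.log 2 (a - 1) with he
    have he1 : 2 ^ e ≤ a - 1 := Nat.pow_log_le_self 2 (by omega)
    have he2 : a - 1 < 2 ^ (e + 1) := Nat.lt_pow_succ_log_self (by norm_num) _
    have he1' : 2 ^ e < a := by omega
    have he2' : a ≤ 2 ^ (e + 1) := by omega
    have hev : e < v := by
      have h1 : (2:ℕ) ^ e < 2 ^ v := lt_of_lt_of_le he1' hav
      exact (Nat.pow_lt_pow_iff_right (by norm_num : 1 < 2)).mp h1
    have he254 : e < 254 := by
      have h1 : (2:ℕ) ^ e < 2 ^ 254 := lt_of_lt_of_le he1' ha254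
      exact (Nat.pow_lt_pow_iff_right (by norm_num : 1 < 2)).mp h1
    set r := Nat.log 2 (e + 1) with hr
    have hr1 : 2 ^ r ≤ e + 1 := Nat.pow_log_le_self 2 (by omega)
    have hr2 : e + 1 < 2 ^ (r + 1) := Nat.lt_pow_succ_log_self (by norm_num) _
    have hr7 : r < 8 := by
      by_contra h
      push_neg at h
      have h1 : (2:ℕ) ^ 8 ≤ 2 ^ r := Nat.pow_le_pow_right (by norm_num) h
      norm_num at h1
      omega
    have hkey := key r (le_trans hr1 (by omega))
    have hrn : r + 5 ≤ n := by omega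
    set p := n - 5 - r with hp
    have hpe : e ≤ p := by omega
    have hr2' : 2 ^ (r + 1) = 2 * 2 ^ r := by rw [pow_succ]; ring
    set cv := 2 ^ (r + 1) - 2 - e with hcv_def
    have hcv : cv < 2 ^ r := by omega
    set fv := (2 ^ (e + 1) - a) * 2 ^ (p - e) with hfv_def
    have hpee : 2 ^ (p - e) * 2 ^ e = 2 ^ p := by
      rw [← pow_add]
      congr 1
      omega
    have he2'' : 2 ^ (e + 1) = 2 * 2 ^ e := by rw [pow_succ]; ring
    have hfv : fv < 2 ^ p := by
      have h1 : 2 ^ (e + 1) - a < 2 ^ e := by omega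
      calc fv < 2 ^ e * 2 ^ (p - e) :=
            Nat.mul_lt_mul_of_lt_of_le h1 (le_refl _) (by positivity)
        _ = 2 ^ p := by rw [mul_comm]; exact hpee
    have hid : fv * 2 ^ e + a * 2 ^ p = 2 ^ (e + 1) * 2 ^ p := by
      have h1 : fv * 2 ^ e = (2 ^ (e + 1) - a) * 2 ^ p := by
        rw [hfv_def, mul_assoc, hpee]
      rw [h1, ← Nat.add_mul]
      congr 1
      omega
    have hnz : (false : Bool) = true ∨ 0 < 7 - r ∨ 0 < cv ∨ 0 < fv := by
      rcases Nat.lt_or_ge r 7 with h | h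
      · exact Or.inr (Or.inl (by omega))
      · have hr7' : r = 7 := by omega
        refine Or.inr (Or.inr (Or.inl ?_))
        rw [hcv_def, hr7']
        norm_num
        omega
    refine ⟨true :: false :: (natBits 3 (7 - r) ++ (natBits r cv ++ natBits p fv)), ?_, ?_⟩
    · simp [natBits_length]
      omega
    · rw [takumVal_encode true false (7 - r) r cv p fv (by omega) (by simp; omega) hcv hfv hnz]
      rw [ham]
      congr 1
      have hcvz : (cv : ℤ) = 2 ^ (r + 1) - 2 - (e : ℤ) := by
        have h1 : ((2 ^ (r + 1) : ℕ) : ℤ) = 2 ^ (r + 1) := by push_cast; ring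
        omega
      have hexp : (if (true : Bool) then (-1 : ℤ) else 1) *
          ((if (false : Bool) then ((2 : ℤ) ^ r - 1 + cv) else (-((2 : ℤ) ^ (r + 1)) + 1 + cv))
            + (if (true : Bool) then 1 else 0)) = ((e : ℕ) : ℤ) := by
        show (-1 : ℤ) * ((-((2 : ℤ) ^ (r + 1)) + 1 + (cv : ℤ)) + 1) = ((e : ℕ) : ℤ)
        rw [hcvz]
        ring
      rw [hexp, zpow_natCast]
      have h2p : ((2 : ℚ) ^ p) ≠ 0 := by positivity
      have hidq : (fv : ℚ) * 2 ^ e + (a : ℚ) * 2 ^ p = 2 ^ (e + 1) * 2 ^ p := by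
        exact_mod_cast congrArg (Nat.cast : ℕ → ℚ) hid
      field_simp
      push_cast at hidq ⊢
      ring_nf at hidq ⊢
      linarith
  · -- zero case
    exact ⟨List.replicate n false, by simp, by
      rw [takumVal_all_false n (by omega)]; norm_num⟩
  · -- positive case
    set a := m.toNat with ha
    have ham : (m : ℚ) = (a : ℚ) := by
      have : (m.toNat : ℤ) = m := Int.toNat_of_nonneg (by omega)
      exact_mod_cast (congrArg (Int.cast : ℤ → ℚ) this).symm
    have ha1 : 1 ≤ a := by omega
    have hav : a ≤ 2 ^ v := by
      have h1 := (abs_le.mp hm).2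
      have h2 : ((2 ^ v : ℕ) : ℤ) = 2 ^ v := by push_cast; ring
      omega
    have ha254 : a ≤ 2 ^ 254 := by
      have h1 := (abs_le.mp hbound).2
      have h2 : ((2 ^ 254 : ℕ) : ℤ) = 2 ^ 254 := by norm_cast
      omega
    set e := Nat.log 2 a with he
    have he1 : 2 ^ e ≤ a := Nat.pow_log_le_self 2 (by omega)
    have he2 : a < 2 ^ (e + 1) := Nat.lt_pow_succ_log_self (by norm_num) _
    have hev : e ≤ v := by
      have h1 : (2:ℕ) ^ e ≤ 2 ^ v := le_trans he1 hav
      exact (Nat.pow_le_pow_iff_right (by norm_num : 1 < 2)).mp h1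
    set r := Nat.log 2 (e + 1) with hr
    have hr1 : 2 ^ r ≤ e + 1 := Nat.pow_log_le_self 2 (by omega)
    have hr2 : e + 1 < 2 ^ (r + 1) := Nat.lt_pow_succ_log_self (by norm_num) _
    have hr7 : r < 8 := by
      by_contra h
      push_neg at h
      have h1 : (2:ℕ) ^ 8 ≤ 2 ^ r := Nat.pow_le_pow_right (by norm_num) h
      have he254 : e < 255 := by
        have h2 : (2:ℕ) ^ e ≤ 2 ^ 254 := le_trans he1 ha254
        have h3 := (Nat.pow_le_pow_iff_right (by norm_num : 1 < 2)).mp h2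
        omega
      norm_num at h1
      omega
    have hr2' : 2 ^ (r + 1) = 2 * 2 ^ r := by rw [pow_succ]; ring
    have hrn : r + 5 ≤ n := by
      by_cases hpow : a = 2 ^ e
      · rcases Nat.lt_or_ge v (2 ^ r) with hvr | hvr
        · -- 2 ^ r = v + 1
          have hrv : 2 ^ r = v + 1 := by omega
          rcases Nat.lt_or_ge r 2 with hrr | hrr
          · omega
          · have h1 : 2 ^ r = 2 * 2 ^ (r - 1) := by
              rw [← pow_succ']
              congr 1
              omega
            have h2 : 2 ^ (r - 1) ≤ v := by omega
            have h3 := key (r - 1) h2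
            have h4 : 4 ≤ 2 ^ r := by
              calc (4:ℕ) = 2 ^ 2 := by norm_num
                _ ≤ 2 ^ r := Nat.pow_le_pow_right (by norm_num) hrr
            omega
        · have h3 := key r hvr
          omega
      · have hev' : e < v := by
          rcases Nat.lt_or_ge e v with h | h
          · exact h
          · exfalso
            have hevv : e = v := by omega
            rw [hevv] at he1
            have : a = 2 ^ v := by omega
            rw [← hevv] at this
            exact hpow this
        have h3 := key r (le_trans hr1 (by omega))
        omega
    set p := n - 5 - r with hp
    set cv := e + 1 - 2 ^ r with hcv_def
    have hcv : cv < 2 ^ r := by omega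
    set fv := (a - 2 ^ e) * 2 ^ (p - e) with hfv_def
    have he2'' : 2 ^ (e + 1) = 2 * 2 ^ e := by rw [pow_succ]; ring
    have hcase : a = 2 ^ e ∨ e ≤ p := by
      by_cases hpow : a = 2 ^ e
      · exact Or.inl hpow
      · refine Or.inr ?_
        have hev' : e < v := by
          rcases Nat.lt_or_ge e v with h | h
          · exact h
          · exfalso
            have hevv : e = v := by omega
            rw [hevv] at he1
            have : a = 2 ^ v := by omega
            rw [← hevv] at this
            exact hpow this
        have h3 := key r (le_trans hr1 (by omega))
        omega
    have hfv : fv < 2 ^ p := by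
      rcases hcase with hpow | hpe
      · rw [hfv_def, hpow]
        simp [Nat.sub_self]
      · have hpee : 2 ^ (p - e) * 2 ^ e = 2 ^ p := by
          rw [← pow_add]
          congr 1
          omega
        have h1 : a - 2 ^ e < 2 ^ e := by omega
        calc fv < 2 ^ e * 2 ^ (p - e) :=
              Nat.mul_lt_mul_of_lt_of_le h1 (le_refl _) (by positivity)
          _ = 2 ^ p := by rw [mul_comm]; exact hpee
    have hid : (2 ^ p + fv) * 2 ^ e = a * 2 ^ p := by
      rcases hcase with hpow | hpe
      · rw [hfv_def, hpow]
        simp [Nat.sub_self]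
        ring_nf
      · have hpee : 2 ^ (p - e) * 2 ^ e = 2 ^ p := by
          rw [← pow_add]
          congr 1
          omega
        have h1 : fv * 2 ^ e = (a - 2 ^ e) * 2 ^ p := by
          rw [hfv_def, mul_assoc, hpee]
        calc (2 ^ p + fv) * 2 ^ e = 2 ^ p * 2 ^ e + fv * 2 ^ e := by ring
          _ = 2 ^ p * 2 ^ e + (a - 2 ^ e) * 2 ^ p := by rw [h1]
          _ = (2 ^ e + (a - 2 ^ e)) * 2 ^ p := by ring
          _ = a * 2 ^ p := by
              congr 1
              omega
    refine ⟨false :: true :: (natBits 3 r ++ (natBits r cv ++ natBits p fv)), ?_, ?_⟩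
    · simp [natBits_length]
      omega
    · rw [takumVal_encode false true r r cv p fv (by omega) (by simp) hcv hfv (Or.inl rfl)]
      rw [ham]
      congr 1
      have hcvz : (cv : ℤ) = (e : ℤ) + 1 - 2 ^ r := by
        have h1 : ((2 ^ r : ℕ) : ℤ) = 2 ^ r := by push_cast; ring
        omega
      have hexp : (if (false : Bool) then (-1 : ℤ) else 1) *
          ((if (true : Bool) then ((2 : ℤ) ^ r - 1 + cv) else (-((2 : ℤ) ^ (r + 1)) + 1 + cv))
            + (if (false : Bool) then 1 else 0)) = ((e : ℕ) : ℤ) := by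
        show (1 : ℤ) * ((((2 : ℤ) ^ r - 1 + (cv : ℤ))) + 0) = ((e : ℕ) : ℤ)
        rw [hcvz]
        ring
      rw [hexp, zpow_natCast]
      have h2p : ((2 : ℚ) ^ p) ≠ 0 := by positivity
      have hidq : ((2:ℚ) ^ p + fv) * 2 ^ e = (a : ℚ) * 2 ^ p := by
        exact_mod_cast congrArg (Nat.cast : ℕ → ℚ) hid
      field_simp
      push_cast at hidq ⊢
      ring_nf at hidq ⊢
      linarith
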